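/- Let u be a finite word of length n and v = R(u) its reverse. If a word w is simultaneously a prefix of u'·u^ω for some suffix u' of u, and a prefix of v'·v^ω for some suffix v' of v, and |w| ≥ n, then w is a palindromic periodicity with period n (i.e., w is a factor of (st)^ω for palindromes s, t with |st| = n). -/
import Mathlib


/-- `w` (of length `n`) is a palindromic periodicity with period `p`: there are
palindromes `s` (length `sl`) and `t` (length `p - sl`), encoded as the word
`u = st` of length `p`, such that `w` is a factor of `(st)^ω` and `|w| ≥ p`. -/
def PalPer {α : Type*} (w : ℕ → α) (n p : ℕ) : Prop :=
  0 < p ∧ p ≤ n ∧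
    ∃ (sl : ℕ) (u : ℕ → α) (k : ℕ), sl ≤ p ∧
      (∀ i j, i + j + 1 = sl → u i = u j) ∧
      (∀ i j, sl ≤ i → sl ≤ j → i + j + 1 = sl + p → u i = u j) ∧
      (∀ i < n, w i = u ((k + i) % p))

/-- Let `u` have length `n` and `v = R(u)` (so `v j = u (n - 1 - j)`).  If `w`
(of length `m ≥ n`) is a prefix of `u'·u^ω` where `u'` is the length-`a` suffix
of `u`, and also a prefix of `v'·v^ω` where `v'` is the length-`b` suffix of `v`
(the prefix conditions are expressed by reading the periodic infinite words),
then `w` is a palindromic periodicity with period `n`. -/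
theorem stmt_8 {α : Type*} (u : ℕ → α) (n : ℕ) (hn : 0 < n)
    (w : ℕ → α) (m a b : ℕ) (ha : a ≤ n) (hb : b ≤ n)
    (h1 : ∀ i < m, w i = u ((n - a + i) % n))
    (h2 : ∀ i < m, w i = u (n - 1 - ((n - b + i) % n)))
    (hm : n ≤ m) :
    PalPer w m n := by
  set A := n - a with hA
  set B := n - b with hB
  set c : ℕ := (3 * n - 1 - A - B) % n with hc
  have hcn : c < n := Nat.mod_lt _ hn
  set U : ℕ → α := fun j => u ((A + j) % n) with hU
  -- key: for i, j < n with (i+j) % n = c, U i = U j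
  have key : ∀ i j, i < n → j < n → (i + j) % n = c → U i = U j := by
    intro i j hi hj hij
    have him : i < m := lt_of_lt_of_le hi hm
    have e1 : u ((A + i) % n) = u (n - 1 - ((B + i) % n)) :=
      (h1 i him).symm.trans (h2 i him)
    set p := (A + j) % n with hp
    set q := (B + i) % n with hq
    have hpn : p < n := Nat.mod_lt _ hn
    have hqn : q < n := Nat.mod_lt _ hn
    have hsum : (p + q) % n = n - 1 := by
      have s1 : (p + q) % n = (A + j + (B + i)) % n := by
        rw [hp, hq, Nat.mod_add_mod, Nat.add_mod_mod]
      have s2 : (A + j + (B + i)) = (A + B) + (i + j) := by ring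
      have s3 : ((A + B) + (i + j)) % n = ((A + B) + c) % n := by
        rw [← Nat.add_mod_mod, hij]
      have s4 : ((A + B) + c) % n = ((A + B) + (3 * n - 1 - A - B)) % n := by
        rw [hc, Nat.add_mod_mod]
      have s5 : (A + B) + (3 * n - 1 - A - B) = (n - 1) + 2 * n := by
        have hA' : A ≤ n := by omega
        have hB' : B ≤ n := by omega
        omega
      rw [s1, s2, s3, s4, s5, Nat.add_mul_mod_self_right, Nat.mod_eq_of_lt (by omega)]
    have hpq : p + q = n - 1 := by
      rcases lt_or_ge (p + q) n with h | h
      · rwa [Nat.mod_eq_of_lt h] at hsum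
      · rw [Nat.mod_eq_sub_mod h, Nat.mod_eq_of_lt (by omega)] at hsum
        omega
    have : (A + j) % n = n - 1 - ((B + i) % n) := by omega
    show u ((A + i) % n) = u ((A + j) % n)
    rw [this, e1]
  refine ⟨hn, hm, c + 1, U, 0, by omega, ?_, ?_, ?_⟩
  · intro i j hij
    exact key i j (by omega) (by omega) (by rw [Nat.mod_eq_of_lt (by omega)]; omega)
  · intro i j hi hj hij
    have hi' : i < n := by omega
    have hj' : j < n := by omega
    have : i + j = c + n := by omega
    exact key i j hi' hj'
      (by rw [this, Nat.add_mod_right, Nat.mod_eq_of_lt hcn])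
  · intro i hi
    show w i = u ((A + (0 + i) % n) % n)
    rw [Nat.zero_add, Nat.add_mod_mod]
    exact h1 i hi
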